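/- Let N > 1, r > 0, p ∈ (1, ∞), and let f ∈ L^q([0, r), m_N) with q the conjugate exponent of p. Define g(x) = (1/h_N(x)) ∫_0^x f dm_N where h_N(x) = N ω_N x^{N-1}. Then for any ψ ∈ C_c^1([0, r)), ∫_0^r g(x) ψ'(x) h_N(x) dx = −∫_0^r f ψ h_N dx. -/

import Mathlib

open MeasureTheory Set ENNReal

/-- `ω_N = π^{N/2} / Γ(N/2 + 1)`. -/
noncomputable def omegaN (N : ℝ) : ℝ := Real.pi ^ (N / 2) / Real.Gamma (N / 2 + 1)

/-- Density `h_N(t) = N ω_N t^{N-1}`. -/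
noncomputable def hdens (N : ℝ) (t : ℝ) : ℝ := N * omegaN N * t ^ (N - 1)

/-- The weighted model measure `m_N = h_N 𝓛¹` on `[0, ∞)`. -/
noncomputable def modelMeasure (N : ℝ) : Measure ℝ :=
  (volume.restrict (Set.Ici (0 : ℝ))).withDensity fun t => ENNReal.ofReal (hdens N t)

lemma omegaN_pos {N : ℝ} (hN : 0 < N) : 0 < omegaN N :=
  div_pos (Real.rpow_pos_of_pos Real.pi_pos _) (Real.Gamma_pos_of_pos (by linarith))

lemma hdens_cont {N : ℝ} (hN : 1 ≤ N) : Continuous (hdens N) := by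
  unfold hdens
  exact continuous_const.mul (Real.continuous_rpow_const (by linarith))


/-- Fubini identity: with `g(x) = (1/h_N(x)) ∫_0^x f dm_N`, for any `ψ ∈ C_c^1([0, r))` one has
`∫_0^r g ψ' h_N dx = -∫_0^r f ψ h_N dx`. -/
theorem stmt8 (N p : ℝ) (hN1 : 1 < N) (hp : 1 < p) (r : ℝ) (hr : 0 < r)
    (f : ℝ → ℝ)
    (hf : MemLp f (ENNReal.ofReal (p / (p - 1))) ((modelMeasure N).restrict (Set.Ico 0 r)))
    (ψ : ℝ → ℝ) (hψ : ContDiff ℝ 1 ψ) (hψc : HasCompactSupport ψ)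
    (hψsupp : tsupport ψ ⊆ Set.Iio r) :
    ∫ x in Set.Ioc (0 : ℝ) r,
        ((1 / hdens N x) * ∫ t in Set.Ioc (0 : ℝ) x, f t ∂(modelMeasure N)) * deriv ψ x
          * hdens N x
      = -∫ x in Set.Ioc (0 : ℝ) r, f x * ψ x * hdens N x := by
  have hNo : 0 < N * omegaN N := mul_pos (by linarith) (omegaN_pos (by linarith))
  have hmeas : Measurable (hdens N) := (hdens_cont hN1.le).measurable
  have hnonneg : ∀ t : ℝ, 0 ≤ t → 0 ≤ hdens N t := fun t ht =>
    mul_nonneg hNo.le (Real.rpow_nonneg ht _)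
  have hpos : ∀ t : ℝ, 0 < t → 0 < hdens N t := fun t ht =>
    mul_pos hNo (Real.rpow_pos_of_pos ht _)
  set c : ℝ → ℝ := fun t => f t * hdens N t with hc_def
  -- integrals against the model measure
  have hmodel : ∀ s : Set ℝ, MeasurableSet s → s ⊆ Ici (0:ℝ) →
      ∫ t in s, f t ∂(modelMeasure N) = ∫ t in s, c t := by
    intro s hs hss
    rw [modelMeasure, restrict_withDensity hs, Measure.restrict_restrict hs,
        inter_eq_left.mpr hss]
    have he : (fun t => ENNReal.ofReal (hdens N t))
        = fun t => ((hdens N t).toNNReal : ℝ≥0∞) := rfl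
    rw [he, integral_withDensity_eq_integral_smul (hmeas.real_toNNReal) f]
    refine setIntegral_congr_fun hs ?_
    intro t ht
    simp only [NNReal.smul_def, Real.coe_toNNReal _ (hnonneg t (hss ht)), smul_eq_mul, hc_def]
    ring
  -- finiteness of the restricted model measure
  have hfin : IsFiniteMeasure ((modelMeasure N).restrict (Ico 0 r)) := by
    constructor
    rw [Measure.restrict_apply_univ, modelMeasure, withDensity_apply _ measurableSet_Ico,
        Measure.restrict_restrict measurableSet_Ico, inter_eq_left.mpr Ico_subset_Ici_self]
    calc ∫⁻ t, ENNReal.ofReal (hdens N t) ∂(volume.restrict (Ico 0 r))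
        ≤ ∫⁻ _, ENNReal.ofReal (N * omegaN N * r ^ (N-1)) ∂(volume.restrict (Ico 0 r)) := by
          refine lintegral_mono_ae ?_
          filter_upwards [ae_restrict_mem measurableSet_Ico] with t ht
          exact ENNReal.ofReal_le_ofReal (mul_le_mul_of_nonneg_left
            (Real.rpow_le_rpow ht.1 ht.2.le (by linarith)) hNo.le)
      _ < ⊤ := by
          rw [lintegral_const, Measure.restrict_apply_univ, Real.volume_Ico]
          exact ENNReal.mul_lt_top ENNReal.ofReal_lt_top ENNReal.ofReal_lt_top
  haveI := hfin
  have hq1 : (1:ℝ≥0∞) ≤ ENNReal.ofReal (p / (p-1)) := by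
    rw [ENNReal.one_le_ofReal, le_div_iff₀ (by linarith)]
    linarith
  have hint_m : Integrable f ((modelMeasure N).restrict (Ico 0 r)) := hf.integrable hq1
  have hrestr : (modelMeasure N).restrict (Ico 0 r)
      = (volume.restrict (Ico 0 r)).withDensity (fun t => ENNReal.ofReal (hdens N t)) := by
    rw [modelMeasure, restrict_withDensity measurableSet_Ico,
        Measure.restrict_restrict measurableSet_Ico, inter_eq_left.mpr Ico_subset_Ici_self]
  have hcI : IntegrableOn c (Ioc 0 r) := by
    have h1 : Integrable (fun t => f t * (ENNReal.ofReal (hdens N t)).toReal)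
        (volume.restrict (Ico 0 r)) :=
      (integrable_withDensity_iff (ENNReal.measurable_ofReal.comp hmeas)
        (ae_of_all _ fun t => ENNReal.ofReal_lt_top)).mp (hrestr ▸ hint_m)
    have h2 : IntegrableOn c (Ico 0 r) := by
      refine h1.congr ?_
      filter_upwards [ae_restrict_mem measurableSet_Ico] with t ht
      simp [hc_def, ENNReal.toReal_ofReal (hnonneg t ht.1)]
    have hres : volume.restrict (Ioc (0:ℝ) r) = volume.restrict (Ico 0 r) :=
      Measure.restrict_congr_set (Ioc_ae_eq_Icc.trans Ico_ae_eq_Icc.symm)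
    unfold IntegrableOn
    rw [hres]; exact h2
  -- ψ facts
  have hψd : Differentiable ℝ ψ := hψ.differentiable (by norm_num)
  have hψ' : Continuous (deriv ψ) := hψ.continuous_deriv le_rfl
  have hψr : ψ r = 0 :=
    image_eq_zero_of_notMem_tsupport (fun h => lt_irrefl r (hψsupp h))
  -- rewrite the LHS
  have hLHS : ∫ x in Ioc (0:ℝ) r,
      ((1 / hdens N x) * ∫ t in Ioc (0:ℝ) x, f t ∂(modelMeasure N)) * deriv ψ x * hdens N x
      = ∫ x in Ioc (0:ℝ) r, (∫ t in Ioc (0:ℝ) x, c t) * deriv ψ x := by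
    refine setIntegral_congr_fun measurableSet_Ioc ?_
    intro x hx
    dsimp only
    rw [hmodel (Ioc 0 x) measurableSet_Ioc (fun t ht => le_of_lt ht.1)]
    have h0 : hdens N x ≠ 0 := (hpos x hx.1).ne'
    field_simp
  rw [hLHS]
  -- Fubini setup
  have hψ'Q : IntegrableOn (deriv ψ) (Ioc (0:ℝ) r) := hψ'.integrableOn_Ioc
  have hFint : Integrable (Function.uncurry fun x t => if t ≤ x then c t * deriv ψ x else 0)
      ((volume.restrict (Ioc (0:ℝ) r)).prod (volume.restrict (Ioc (0:ℝ) r))) := by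
    have heq : (Function.uncurry fun x t : ℝ => if t ≤ x then c t * deriv ψ x else 0)
        = {q : ℝ × ℝ | q.2 ≤ q.1}.indicator (fun q => deriv ψ q.1 * c q.2) := by
      funext q
      simp only [Function.uncurry, Set.indicator_apply, Set.mem_setOf_eq, mul_comm]
    rw [heq]
    exact (Integrable.mul_prod hψ'Q hcI).indicator (measurableSet_le measurable_snd measurable_fst)
  have hinner1 : ∀ x ∈ Ioc (0:ℝ) r,
      (∫ t in Ioc (0:ℝ) x, c t) * deriv ψ x
      = ∫ t in Ioc (0:ℝ) r, (if t ≤ x then c t * deriv ψ x else 0) := by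
    intro x hx
    have h1 : (fun t => if t ≤ x then c t * deriv ψ x else 0)
        = (Iic x).indicator (fun t => c t * deriv ψ x) := by
      funext t; simp [Set.indicator_apply]
    rw [h1, integral_indicator measurableSet_Iic, Measure.restrict_restrict measurableSet_Iic]
    have h2 : Iic x ∩ Ioc (0:ℝ) r = Ioc 0 x := by
      ext t
      simp only [mem_inter_iff, mem_Iic, mem_Ioc]
      exact ⟨fun ⟨a, b, _⟩ => ⟨b, a⟩, fun ⟨a, b⟩ => ⟨b, a, b.trans hx.2⟩⟩
    rw [h2, integral_mul_const]
  rw [setIntegral_congr_fun measurableSet_Ioc hinner1,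
      integral_integral_swap hFint]
  have hinner2 : ∀ t ∈ Ioc (0:ℝ) r,
      (∫ x in Ioc (0:ℝ) r, (if t ≤ x then c t * deriv ψ x else 0))
      = c t * (-ψ t) := by
    intro t ht
    have h1 : (fun x => if t ≤ x then c t * deriv ψ x else 0)
        = (Ici t).indicator (fun x => c t * deriv ψ x) := by
      funext x; simp [Set.indicator_apply]
    rw [h1, integral_indicator measurableSet_Ici, Measure.restrict_restrict measurableSet_Ici]
    have h2 : Ici t ∩ Ioc (0:ℝ) r = Icc t r := by
      ext x
      simp only [mem_inter_iff, mem_Ici, mem_Ioc, mem_Icc]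
      exact ⟨fun ⟨a, _, b⟩ => ⟨a, b⟩, fun ⟨a, b⟩ => ⟨a, lt_of_lt_of_le ht.1 a, b⟩⟩
    rw [h2, integral_const_mul]
    congr 1
    have h3 : volume.restrict (Icc t r) = volume.restrict (Ioc t r) :=
      Measure.restrict_congr_set (Ioc_ae_eq_Icc.symm)
    rw [show (∫ x in Icc t r, deriv ψ x) = ∫ x in Ioc t r, deriv ψ x by rw [h3],
        ← intervalIntegral.integral_of_le ht.2,
        intervalIntegral.integral_deriv_eq_sub (fun x _ => hψd x)
          (hψ'.intervalIntegrable t r), hψr]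
    ring
  rw [setIntegral_congr_fun measurableSet_Ioc hinner2, ← integral_neg]
  refine setIntegral_congr_fun measurableSet_Ioc ?_
  intro t ht
  simp only [hc_def]
  ring
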